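/- Let (E,z) be a gradient pair for H ∈ C¹(X,ℝ) on an open set X ⊆ ℝⁿ, and let (Ē,z̄) be a discrete gradient pair for (H,E,z). Let h > 0, let J̄, R̄ : X × X → ℝ^{n×n} and B̄ : X × X → ℝ^{n×m} be continuous with J̄(x,x') = −J̄(x,x')ᵀ and R̄(x,x') symmetric positive semi-definite for all x,x' ∈ X. Suppose x^k, x^{k+1} ∈ X, u^k ∈ ℝᵐ, y^k ∈ ℝᵐ satisfy Ē(x^k,x^{k+1})(x^{k+1} − x^k) = h (J̄(x^k,x^{k+1}) − R̄(x^k,x^{k+1})) z̄(x^k,x^{k+1}) + h B̄(x^k,x^{k+1}) u^k and y^k = B̄(x^k,x^{k+1})ᵀ z̄(x^k,x^{k+1}). Then H(x^{k+1}) − H(x^k) = −h z̄(x^k,x^{k+1})ᵀ R̄(x^k,x^{k+1}) z̄(x^k,x^{k+1}) + h (y^k)ᵀ u^k, and in particular H(x^{k+1}) − H(x^k) ≤ h (y^k)ᵀ u^k. -/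

import Mathlib

open Matrix Set

noncomputable def grad {n : ℕ} (f : (Fin n → ℝ) → ℝ) (x : Fin n → ℝ) : Fin n → ℝ :=
  fun i => fderiv ℝ f x (Pi.single i 1)

/-- A discrete gradient pair `(Ē, z̄)` for `(H, E, z)`: continuity, directionality,
and consistency with `E` and `z` on the diagonal. -/
def IsDiscreteGradientPair {n : ℕ} (X : Set (Fin n → ℝ)) (H : (Fin n → ℝ) → ℝ)
    (E : (Fin n → ℝ) → Matrix (Fin n) (Fin n) ℝ) (z : (Fin n → ℝ) → (Fin n → ℝ))
    (Ebar : (Fin n → ℝ) → (Fin n → ℝ) → Matrix (Fin n) (Fin n) ℝ)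
    (zbar : (Fin n → ℝ) → (Fin n → ℝ) → (Fin n → ℝ)) : Prop :=
  ContinuousOn (fun p : (Fin n → ℝ) × (Fin n → ℝ) => Ebar p.1 p.2) (X ×ˢ X) ∧
  ContinuousOn (fun p : (Fin n → ℝ) × (Fin n → ℝ) => zbar p.1 p.2) (X ×ˢ X) ∧
  (∀ x ∈ X, ∀ x' ∈ X, zbar x x' ⬝ᵥ (Ebar x x').mulVec (x' - x) = H x' - H x) ∧
  (∀ x ∈ X, Ebar x x = E x) ∧
  (∀ x ∈ X, zbar x x = z x)

/-- discrete power balance and dissipation inequality for the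
discrete gradient pair scheme applied to a general pHDAE. -/
theorem discrete_gradient_pair_scheme_power_balance {n m : ℕ}
    (X : Set (Fin n → ℝ)) (hX : IsOpen X)
    (H : (Fin n → ℝ) → ℝ) (hH : ContDiffOn ℝ 1 H X)
    (E : (Fin n → ℝ) → Matrix (Fin n) (Fin n) ℝ) (z : (Fin n → ℝ) → (Fin n → ℝ))
    (hEcont : ContinuousOn E X) (hzcont : ContinuousOn z X)
    (hgradpair : ∀ x ∈ X, (E x)ᵀ.mulVec (z x) = grad H x)
    (Ebar : (Fin n → ℝ) → (Fin n → ℝ) → Matrix (Fin n) (Fin n) ℝ)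
    (zbar : (Fin n → ℝ) → (Fin n → ℝ) → (Fin n → ℝ))
    (hpair : IsDiscreteGradientPair X H E z Ebar zbar)
    (h : ℝ) (hh : 0 < h)
    (Jbar Rbar : (Fin n → ℝ) → (Fin n → ℝ) → Matrix (Fin n) (Fin n) ℝ)
    (Bbar : (Fin n → ℝ) → (Fin n → ℝ) → Matrix (Fin n) (Fin m) ℝ)
    (hJcont : ContinuousOn (fun p : (Fin n → ℝ) × (Fin n → ℝ) => Jbar p.1 p.2) (X ×ˢ X))
    (hRcont : ContinuousOn (fun p : (Fin n → ℝ) × (Fin n → ℝ) => Rbar p.1 p.2) (X ×ˢ X))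
    (hBcont : ContinuousOn (fun p : (Fin n → ℝ) × (Fin n → ℝ) => Bbar p.1 p.2) (X ×ˢ X))
    (hJskew : ∀ x ∈ X, ∀ x' ∈ X, (Jbar x x')ᵀ = -(Jbar x x'))
    (hRpsd : ∀ x ∈ X, ∀ x' ∈ X, (Rbar x x').PosSemidef)
    (xk xk1 : Fin n → ℝ) (hxk : xk ∈ X) (hxk1 : xk1 ∈ X)
    (uk yk : Fin m → ℝ)
    (hstep : (Ebar xk xk1).mulVec (xk1 - xk)
      = h • ((Jbar xk xk1 - Rbar xk xk1).mulVec (zbar xk xk1))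
        + h • ((Bbar xk xk1).mulVec uk))
    (hout : yk = (Bbar xk xk1)ᵀ.mulVec (zbar xk xk1)) :
    H xk1 - H xk
      = -(h * (zbar xk xk1 ⬝ᵥ (Rbar xk xk1).mulVec (zbar xk xk1))) + h * (yk ⬝ᵥ uk)
    ∧ H xk1 - H xk ≤ h * (yk ⬝ᵥ uk) := by

  set zb := zbar xk xk1
  have hbal := hpair.2.2.1 xk hxk xk1 hxk1
  have hskew : zb ⬝ᵥ (Jbar xk xk1).mulVec zb = 0 := by
    have h1 : zb ⬝ᵥ (Jbar xk xk1).mulVec zb = -(zb ⬝ᵥ (Jbar xk xk1).mulVec zb) := by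
      conv_lhs => rw [Matrix.dotProduct_mulVec, ← Matrix.mulVec_transpose,
        hJskew xk hxk xk1 hxk1, Matrix.neg_mulVec, neg_dotProduct,
        dotProduct_comm]
    linarith
  have hyu : yk ⬝ᵥ uk = zb ⬝ᵥ (Bbar xk xk1).mulVec uk := by
    rw [hout, Matrix.mulVec_transpose, ← Matrix.dotProduct_mulVec]
  have key : H xk1 - H xk
      = -(h * (zb ⬝ᵥ (Rbar xk xk1).mulVec zb)) + h * (yk ⬝ᵥ uk) := by
    rw [← hbal, hstep, hyu]
    simp only [dotProduct_add, dotProduct_smul, Matrix.sub_mulVec,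
      dotProduct_sub, smul_eq_mul, hskew]
    rw [show zbar xk xk1 = zb from rfl, hskew]
    ring
  refine ⟨key, ?_⟩
  have hpsd := (hRpsd xk hxk xk1 hxk1).dotProduct_mulVec_nonneg zb
  simp only [star_trivial] at hpsd
  nlinarith [mul_nonneg hh.le hpsd]
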